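/- Let S be a monoid such that S ∖ R₁ = s₁S ∪ ⋯ ∪ sₘS for some s₁, …, sₘ ∈ S, where R₁ = {a ∈ S | aS = S}, and suppose that for every set I and every ultrafilter Φ on I the ultrapower S^I/Φ of the left S-act S is free. Then the group of units H₁ of S has finite right index in S: there exist u₁, …, uₙ ∈ S with S = u₁H₁ ∪ ⋯ ∪ uₙH₁. -/

import Mathlib

universe u

/-- A left `S`-act `F` is free if it has a basis `X`: every element of `F` is
uniquely of the form `s • x` with `s ∈ S` and `x ∈ X`. -/
def IsFreeAct (S : Type u) [Monoid S] (F : Type u) [MulAction S F] : Prop :=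
  ∃ X : Set F, ∀ a : F, ∃! p : S × X, p.1 • (p.2 : F) = a

namespace Stmt19Aux

variable {S : Type u} [Monoid S]

lemma range_mul_eq_univ_iff (a : S) :
    Set.range (fun x => a * x) = Set.univ ↔ ∃ b, a * b = 1 := by
  constructor
  · intro h
    have h1 : (1 : S) ∈ Set.range (fun x => a * x) := by rw [h]; trivial
    obtain ⟨b, hb⟩ := h1
    exact ⟨b, hb⟩
  · rintro ⟨b, hb⟩
    apply Set.eq_univ_of_forall
    intro y
    exact ⟨b * y, by show a * (b * y) = y; rw [← mul_assoc, hb, one_mul]⟩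

/-- In a free ultrapower, the components of any basis element are a.e.
right invertible. -/
lemma basis_rightinv
    {m : ℕ} {si : Fin m → S}
    (hni : ∀ a : S, (¬ ∃ b, a * b = 1) → ∃ j : Fin m, ∃ y, si j * y = a)
    (hsj : ∀ j : Fin m, ¬ ∃ b, si j * b = 1)
    {I : Type u} {Φ : Ultrafilter I}
    {X : Set (Filter.Germ (Φ : Filter I) S)}
    (hX : ∀ a : Filter.Germ (Φ : Filter I) S, ∃! p : S × X,
      p.1 • (p.2 : Filter.Germ (Φ : Filter I) S) = a)
    (x : X) (ψ : I → S)
    (hψ : (↑ψ : Filter.Germ (Φ : Filter I) S) = (x : Filter.Germ (Φ : Filter I) S)) :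
    {i | ∃ b, ψ i * b = 1} ∈ Φ := by
  classical
  by_contra hA
  have hAc : {i | ¬ ∃ b, ψ i * b = 1} ∈ Φ := by
    have h := (Ultrafilter.compl_mem_iff_notMem (f := Φ)
      (s := {i | ∃ b, ψ i * b = 1})).2 hA
    simpa [Set.compl_setOf] using h
  by_cases hm : ∃ j : Fin m, {i | ∃ y, si j * y = ψ i} ∈ Φ
  · obtain ⟨j, hBj⟩ := hm
    set g : I → S := fun i => if h : ∃ y, si j * y = ψ i then h.choose else 1 with hg
    have hsmul : (si j) • (↑g : Filter.Germ (Φ : Filter I) S)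
        = (x : Filter.Germ (Φ : Filter I) S) := by
      rw [← hψ, ← Filter.Germ.coe_smul]
      apply Filter.Germ.coe_eq.2
      have hBj' : ∀ᶠ i in (Φ : Filter I), ∃ y, si j * y = ψ i := hBj
      filter_upwards [hBj'] with i hi
      simp only [Pi.smul_apply, smul_eq_mul, hg]
      rw [dif_pos hi]
      exact hi.choose_spec
    obtain ⟨⟨r, z⟩, hrz, -⟩ := hX (↑g : Filter.Germ (Φ : Filter I) S)
    obtain ⟨p, -, hup⟩ := hX (x : Filter.Germ (Φ : Filter I) S)
    have h1 : (((1 : S), x) : S × X).1 • ((((1 : S), x) : S × X).2 :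
        Filter.Germ (Φ : Filter I) S) = (x : Filter.Germ (Φ : Filter I) S) :=
      one_smul _ _
    have h2 : ((si j * r, z) : S × X).1 • (((si j * r, z) : S × X).2 :
        Filter.Germ (Φ : Filter I) S) = (x : Filter.Germ (Φ : Filter I) S) := by
      show (si j * r) • (z : Filter.Germ (Φ : Filter I) S) = _
      rw [mul_smul]
      rw [show (r • (z : Filter.Germ (Φ : Filter I) S)) = ↑g from hrz]
      exact hsmul
    have heq := (hup _ h1).trans (hup _ h2).symm
    have h1r : (1 : S) = si j * r := congrArg Prod.fst heq
    exact hsj j ⟨r, h1r.symm⟩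
  · push_neg at hm
    have hc : ∀ j : Fin m, {i | ∃ y, si j * y = ψ i}ᶜ ∈ Φ := fun j =>
      (Ultrafilter.compl_mem_iff_notMem).2 (hm j)
    have hall : (⋂ j : Fin m, {i | ∃ y, si j * y = ψ i}ᶜ) ∈ Φ :=
      Filter.iInter_mem.2 hc
    have hne : ((⋂ j : Fin m, {i | ∃ y, si j * y = ψ i}ᶜ) ∩
        {i | ¬ ∃ b, ψ i * b = 1}) ∈ Φ := Filter.inter_mem hall hAc
    obtain ⟨i, hi1, hi2⟩ := Filter.nonempty_of_mem hne
    obtain ⟨j, y, hy⟩ := hni (ψ i) hi2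
    exact (Set.mem_iInter.1 hi1 j) ⟨y, hy⟩

/-- Every right-invertible element is a unit. -/
lemma all_units
    {m : ℕ} {si : Fin m → S}
    (hni : ∀ a : S, (¬ ∃ b, a * b = 1) → ∃ j : Fin m, ∃ y, si j * y = a)
    (hsj : ∀ j : Fin m, ¬ ∃ b, si j * b = 1)
    (hfree : ∀ (I : Type u) (Φ : Ultrafilter I), IsFreeAct S (Filter.Germ (Φ : Filter I) S))
    (b c : S) (hbc : b * c = 1) : IsUnit b := by
  by_contra hb
  have hcb : ¬ ∃ d, c * d = 1 := by
    rintro ⟨d, hd⟩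
    have hbd : b = d := by
      calc b = b * (c * d) := by rw [hd, mul_one]
        _ = (b * c) * d := by rw [mul_assoc]
        _ = d := by rw [hbc, one_mul]
    exact hb ⟨⟨b, c, hbc, by rw [hbd]; exact hd⟩, rfl⟩
  have hpow : ∀ k : ℕ, b ^ k * c ^ k = 1 := by
    intro k
    induction k with
    | zero => simp
    | succ n ih =>
      rw [pow_succ, pow_succ', mul_assoc, ← mul_assoc b c, hbc, one_mul, ih]
  set I := ULift.{u} ℕ
  set Φ : Ultrafilter I := Filter.hyperfilter I with hΦ
  obtain ⟨X, hX⟩ := hfree I Φ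
  obtain ⟨⟨τ, χ⟩, hp, -⟩ := hX (↑(fun i : I => c ^ (i.down + 1)) :
    Filter.Germ (Φ : Filter I) S)
  have hrep : ∃ ψ : I → S, (↑ψ : Filter.Germ (Φ : Filter I) S)
      = (χ : Filter.Germ (Φ : Filter I) S) :=
    Filter.Germ.inductionOn (χ : Filter.Germ (Φ : Filter I) S) fun ψ => ⟨ψ, rfl⟩
  obtain ⟨ψ, hψ⟩ := hrep
  have hB : {i : I | τ * ψ i = c ^ (i.down + 1)} ∈ Φ := by
    have : (τ • (↑ψ : Filter.Germ (Φ : Filter I) S))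
        = (↑(fun i : I => c ^ (i.down + 1)) : Filter.Germ (Φ : Filter I) S) := by
      rw [hψ]; exact hp
    rw [← Filter.Germ.coe_smul, Filter.Germ.coe_eq] at this
    have h2 : ∀ᶠ i in (Φ : Filter I), τ * ψ i = c ^ (i.down + 1) := by
      filter_upwards [this] with i hi
      simpa [Pi.smul_apply, smul_eq_mul] using hi
    exact h2
  have hA : {i : I | ∃ r, ψ i * r = 1} ∈ Φ := basis_rightinv hni hsj hX χ ψ hψ
  have hE : ({i : I | ∃ r, ψ i * r = 1} ∩ {i : I | τ * ψ i = c ^ (i.down + 1)}) ∈ Φ :=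
    Filter.inter_mem hA hB
  have hEinf : ({i : I | ∃ r, ψ i * r = 1} ∩
      {i : I | τ * ψ i = c ^ (i.down + 1)}).Infinite := by
    by_contra h
    rw [Set.not_infinite] at h
    exact Set.Finite.notMem_hyperfilter h hE
  -- key step: two indices with different exponents give a contradiction
  have key : ∀ i j : I,
      i ∈ ({i : I | ∃ r, ψ i * r = 1} ∩ {i : I | τ * ψ i = c ^ (i.down + 1)}) →
      j ∈ ({i : I | ∃ r, ψ i * r = 1} ∩ {i : I | τ * ψ i = c ^ (i.down + 1)}) →
      i.down < j.down → False := by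
    rintro i j ⟨⟨r, hr⟩, hτi⟩ ⟨⟨r', hr'⟩, hτj⟩ hlt
    set k := i.down + 1 with hk
    set l := j.down + 1 with hl
    have hkl : k < l := by omega
    have hτi' : τ * ψ i = c ^ k := hτi
    have hτj' : τ * ψ j = c ^ l := hτj
    have hL : (b ^ k * τ) * ψ i = 1 := by
      rw [mul_assoc, hτi', hpow k]
    have hrL : r = b ^ k * τ := by
      calc r = 1 * r := (one_mul r).symm
        _ = ((b ^ k * τ) * ψ i) * r := by rw [hL]
        _ = (b ^ k * τ) * (ψ i * r) := by rw [mul_assoc]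
        _ = b ^ k * τ := by rw [hr, mul_one]
    have hri : r * ψ i = 1 := by rw [hrL]; exact hL
    have hτeqj : τ = c ^ l * r' := by
      calc τ = τ * (ψ j * r') := by rw [hr', mul_one]
        _ = (τ * ψ j) * r' := by rw [mul_assoc]
        _ = c ^ l * r' := by rw [hτj']
    have hlk : c ^ l = c ^ k * c ^ (l - k) := by
      rw [← pow_add]
      congr 1
      omega
    have hrc : r = c ^ (l - k) * r' := by
      calc r = b ^ k * τ := hrL
        _ = b ^ k * (c ^ l * r') := by rw [hτeqj]
        _ = b ^ k * ((c ^ k * c ^ (l - k)) * r') := by rw [← hlk]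
        _ = b ^ k * (c ^ k * (c ^ (l - k) * r')) := by rw [mul_assoc (c ^ k)]
        _ = (b ^ k * c ^ k) * (c ^ (l - k) * r') := by rw [← mul_assoc]
        _ = c ^ (l - k) * r' := by rw [hpow k, one_mul]
    have hd : c ^ (l - k) = c * c ^ (l - k - 1) := by
      rw [← pow_succ']
      congr 1
      omega
    have hfinal : c * (c ^ (l - k - 1) * (r' * ψ i)) = 1 := by
      calc c * (c ^ (l - k - 1) * (r' * ψ i))
          = (c * c ^ (l - k - 1)) * (r' * ψ i) := by rw [← mul_assoc]
        _ = c ^ (l - k) * (r' * ψ i) := by rw [← hd]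
        _ = (c ^ (l - k) * r') * ψ i := by rw [← mul_assoc]
        _ = r * ψ i := by rw [← hrc]
        _ = 1 := hri
    exact hcb ⟨_, hfinal⟩
  obtain ⟨i, hiE, j, hjE, hij⟩ := hEinf.nontrivial
  rcases Nat.lt_trichotomy i.down j.down with h | h | h
  · exact key i j hiE hjE h
  · exact hij (ULift.ext i j h)
  · exact key j i hjE hiE h

/-- The right-coset-of-units equivalence. -/
def cosetSetoid (S : Type u) [Monoid S] : Setoid S where
  r a b := ∃ h : Sˣ, a = b * (h : S)
  iseqv := by
    refine ⟨fun a => ⟨1, by simp⟩, ?_, ?_⟩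
    · rintro a b ⟨h, e⟩
      exact ⟨h⁻¹, by rw [e, mul_assoc, Units.mul_inv, mul_one]⟩
    · rintro a b cc ⟨h, e⟩ ⟨g, e'⟩
      exact ⟨g * h, by rw [e, e', Units.val_mul, mul_assoc]⟩

end Stmt19Aux

open Stmt19Aux in
/-- let `S` be a monoid with `S ∖ R₁ = s₁S ∪ ⋯ ∪ sₘS` (where
`R₁ = {a | aS = S}`), and suppose every ultrapower `S^I/Φ` of the left `S`-act
`S` is free. Then the group of units `H₁` has finite right index:
`S = u₁H₁ ∪ ⋯ ∪ uₙH₁`. -/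
theorem stmt_19 {S : Type u} [Monoid S]
    (m : ℕ) (si : Fin m → S)
    (hcover : {a : S | Set.range (fun x => a * x) = Set.univ}ᶜ =
      ⋃ i, Set.range (fun x => si i * x))
    (hfree : ∀ (I : Type u) (Φ : Ultrafilter I), IsFreeAct S (Filter.Germ (Φ : Filter I) S)) :
    ∃ (n : ℕ) (u : Fin n → S), ∀ x : S, ∃ (i : Fin n) (h : Sˣ), x = u i * (h : S) := by
  classical
  have hni : ∀ a : S, (¬ ∃ b, a * b = 1) → ∃ j : Fin m, ∃ y, si j * y = a := by
    intro a ha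
    have hmem : a ∈ {a : S | Set.range (fun x => a * x) = Set.univ}ᶜ := by
      simp only [Set.mem_compl_iff, Set.mem_setOf_eq]
      rw [range_mul_eq_univ_iff]
      exact ha
    rw [hcover] at hmem
    simpa [Set.mem_iUnion] using hmem
  have hsj : ∀ j : Fin m, ¬ ∃ b, si j * b = 1 := by
    intro j
    have hmem : si j ∈ ⋃ i, Set.range (fun x => si i * x) :=
      Set.mem_iUnion.2 ⟨j, ⟨1, mul_one _⟩⟩
    rw [← hcover] at hmem
    simp only [Set.mem_compl_iff, Set.mem_setOf_eq] at hmem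
    rw [range_mul_eq_univ_iff] at hmem
    exact hmem
  have hunits : ∀ b : S, (∃ c, b * c = 1) → IsUnit b := by
    rintro b ⟨c, hbc⟩
    exact all_units hni hsj hfree b c hbc
  by_contra hno
  push_neg at hno
  letI st : Setoid S := cosetSetoid S
  -- the coset space is infinite
  have hQinf : Infinite (Quotient st) := by
    by_contra h
    rw [not_infinite_iff_finite] at h
    haveI : Fintype (Quotient st) := Fintype.ofFinite _
    set n := Fintype.card (Quotient st)
    set e := Fintype.equivFin (Quotient st) with he
    obtain ⟨x, hx⟩ := hno n (fun i => (e.symm i).out)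
    have hout : (e.symm (e ⟦x⟧)).out = (⟦x⟧ : Quotient st).out := by
      rw [Equiv.symm_apply_apply]
    obtain ⟨hu, hhu⟩ : x ≈ (⟦x⟧ : Quotient st).out := Setoid.symm (Quotient.mk_out x)
    exact hx (e ⟦x⟧) hu (by rw [hout]; exact hhu)
  set emb := Infinite.natEmbedding (Quotient st) with hemb
  set cseq : ℕ → S := fun n => (emb n).out with hcseq
  have hdist : ∀ a b : ℕ, a ≠ b → ∀ h : Sˣ, cseq a ≠ cseq b * (h : S) := by
    intro a b hab h heq
    apply hab
    apply emb.injective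
    have : (⟦cseq a⟧ : Quotient st) = ⟦cseq b⟧ := Quotient.sound ⟨h, heq⟩
    rwa [hcseq, Quotient.out_eq, Quotient.out_eq] at this
  set I := ULift.{u} ℕ
  set Φ : Ultrafilter I := Filter.hyperfilter I with hΦ
  obtain ⟨X, hX⟩ := hfree I Φ
  obtain ⟨⟨t, xx⟩, hp, -⟩ := hX (↑(fun i : I => cseq i.down) :
    Filter.Germ (Φ : Filter I) S)
  have hrep : ∃ ψ : I → S, (↑ψ : Filter.Germ (Φ : Filter I) S)
      = (xx : Filter.Germ (Φ : Filter I) S) :=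
    Filter.Germ.inductionOn (xx : Filter.Germ (Φ : Filter I) S) fun ψ => ⟨ψ, rfl⟩
  obtain ⟨ψ, hψ⟩ := hrep
  have hB : {i : I | t * ψ i = cseq i.down} ∈ Φ := by
    have h1 : (t • (↑ψ : Filter.Germ (Φ : Filter I) S))
        = (↑(fun i : I => cseq i.down) : Filter.Germ (Φ : Filter I) S) := by
      rw [hψ]; exact hp
    rw [← Filter.Germ.coe_smul, Filter.Germ.coe_eq] at h1
    have h2 : ∀ᶠ i in (Φ : Filter I), t * ψ i = cseq i.down := by
      filter_upwards [h1] with i hi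
      simpa [Pi.smul_apply, smul_eq_mul] using hi
    exact h2
  have hA : {i : I | ∃ b, ψ i * b = 1} ∈ Φ := basis_rightinv hni hsj hX xx ψ hψ
  have hE : ({i : I | ∃ b, ψ i * b = 1} ∩ {i : I | t * ψ i = cseq i.down}) ∈ Φ :=
    Filter.inter_mem hA hB
  have hEinf : ({i : I | ∃ b, ψ i * b = 1} ∩
      {i : I | t * ψ i = cseq i.down}).Infinite := by
    by_contra h
    rw [Set.not_infinite] at h
    exact Set.Finite.notMem_hyperfilter h hE
  obtain ⟨i, hiE, j, hjE, hij⟩ := hEinf.nontrivial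
  obtain ⟨hri, hti⟩ := hiE
  obtain ⟨hrj, htj⟩ := hjE
  have hui : IsUnit (ψ i) := hunits _ hri
  have huj : IsUnit (ψ j) := hunits _ hrj
  set ui := hui.unit with hui'
  set uj := huj.unit with huj'
  have hdown : i.down ≠ j.down := fun h => hij (ULift.ext i j h)
  apply hdist i.down j.down hdown (uj⁻¹ * ui)
  have hti' : t * (ui : S) = cseq i.down := by rw [IsUnit.unit_spec]; exact hti
  have htj' : t * (uj : S) = cseq j.down := by rw [IsUnit.unit_spec]; exact htj
  calc cseq i.down = t * (ui : S) := hti'.symm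
    _ = t * (((uj : S) * (uj⁻¹ : Sˣ)) * (ui : S)) := by rw [Units.mul_inv, one_mul]
    _ = (t * (uj : S)) * (((uj⁻¹ : Sˣ) : S) * (ui : S)) := by
        rw [mul_assoc, mul_assoc]
    _ = cseq j.down * ((uj⁻¹ * ui : Sˣ) : S) := by rw [htj', Units.val_mul]
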